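/- For every i with 0 ≤ i ≤ n−1, the Lagrange interpolation polynomial f_i = ∏_{j=0, j≠i}^{n−1} (x − α^j)/(α^i − α^j) satisfies f_i = −(α^i x^{n−1} + α^{2i} x^{n−2} + α^{3i} x^{n−3} + … + α^{(n−1)i} x + α^{ni}). -/

import Mathlib

open Polynomial

/-- the Lagrange interpolation polynomial
`f_i = ∏_{j≠i} (x - α^j)/(α^i - α^j)` equals
`-(α^i x^{n-1} + α^{2i} x^{n-2} + … + α^{(n-1)i} x + α^{ni})`. -/
theorem stmt_3 {F : Type*} [Field F] [Fintype F] (α : F)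
    (n : ℕ) (hn : n = Fintype.card F - 1) (hα : orderOf α = n)
    (i : ℕ) (hi : i < n) :
    ∏ j ∈ (Finset.range n).erase i,
        (Polynomial.C ((α ^ i - α ^ j)⁻¹) * (Polynomial.X - Polynomial.C (α ^ j))) =
      -∑ m ∈ Finset.Icc 1 n, Polynomial.C (α ^ (m * i)) * Polynomial.X ^ (n - m) := by
  classical
  have hn0 : 0 < n := Nat.lt_of_le_of_lt (Nat.zero_le i) hi
  haveI : NeZero n := ⟨hn0.ne'⟩
  set a : F := α ^ i with ha
  have hprim : IsPrimitiveRoot α n := hα ▸ IsPrimitiveRoot.orderOf α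
  have han : a ^ n = 1 := by
    rw [ha, ← pow_mul, mul_comm, pow_mul, hprim.pow_eq_one, one_pow]
  have haz : a ≠ 0 := pow_ne_zero _ (hprim.ne_zero hn0.ne')
  set T : F[X] := ∑ k ∈ Finset.range n, X ^ k * (C a) ^ (n - 1 - k) with hT
  have hgeom : T * (X - C a) = X ^ n - 1 := by
    rw [hT, geom_sum₂_mul, ← C_pow, han, map_one]
  have himg : nthRootsFinset n (1 : F) = (Finset.range n).image (α ^ ·) := by
    apply Finset.eq_of_subset_of_card_le
    · intro x hx
      obtain ⟨j, hjn, hj⟩ := hprim.eq_pow_of_pow_eq_one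
        ((Polynomial.mem_nthRootsFinset hn0 (1 : F)).1 hx)
      exact Finset.mem_image.2 ⟨j, Finset.mem_range.2 hjn, hj⟩
    · rw [hprim.card_nthRootsFinset, Finset.card_image_of_injOn hprim.injOn_pow,
        Finset.card_range]
  have hprod : ∏ j ∈ Finset.range n, (X - C (α ^ j)) = X ^ n - 1 := by
    rw [X_pow_sub_one_eq_prod hn0 hprim, himg,
      Finset.prod_image (fun x hx y hy h =>
        hprim.injOn_pow (Finset.mem_coe.2 hx) (Finset.mem_coe.2 hy) h)]
  set P : F[X] := ∏ j ∈ (Finset.range n).erase i, (X - C (α ^ j)) with hP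
  have hPT : P = T := by
    have h1 : (X - C a) * P = (X - C a) * T := by
      rw [hP, ha,
        Finset.mul_prod_erase (Finset.range n) (fun j => (X : F[X]) - C (α ^ j))
          (Finset.mem_range.2 hi), hprod, ← hgeom, mul_comm]
    exact mul_left_cancel₀ (X_sub_C_ne_zero a) h1
  have hnF : ((n : ℕ) : F) = -1 := by
    have hcard : ((Fintype.card F : ℕ) : F) = 0 := FiniteField.cast_card_eq_zero F
    have h2 : 2 ≤ Fintype.card F := Fintype.one_lt_card
    have hc : Fintype.card F = n + 1 := by omega
    rw [hc] at hcard
    push_cast at hcard ⊢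
    linear_combination hcard
  have hTeval : T.eval a = -(a ^ (n - 1)) := by
    rw [hT, eval_finset_sum]
    have hterm : ∀ k ∈ Finset.range n,
        ((X : F[X]) ^ k * (C a) ^ (n - 1 - k)).eval a = a ^ (n - 1) := by
      intro k hk
      simp only [eval_mul, eval_pow, eval_X, eval_C]
      rw [← pow_add]
      congr 1
      have := Finset.mem_range.1 hk
      omega
    rw [Finset.sum_congr rfl hterm, Finset.sum_const, Finset.card_range, nsmul_eq_mul,
      hnF]
    ring
  have hD : ∏ j ∈ (Finset.range n).erase i, (a - α ^ j) = -(a ^ (n - 1)) := by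
    have h := congrArg (Polynomial.eval a) hPT
    rw [hP, eval_prod, hTeval] at h
    simpa using h
  have hinv : (-(a ^ (n - 1)))⁻¹ = -a := by
    rw [inv_neg]
    have h1 : a ^ (n - 1) * a = 1 := by
      rw [← pow_succ, Nat.sub_add_cancel hn0, han]
    rw [inv_eq_of_mul_eq_one_right h1]
  have hS : C a * T = ∑ m ∈ Finset.Icc 1 n, C (α ^ (m * i)) * X ^ (n - m) := by
    rw [hT, Finset.mul_sum]
    refine Finset.sum_bij' (fun k _ => n - k) (fun m _ => n - m) ?_ ?_ ?_ ?_ ?_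
    · intro k hk
      have := Finset.mem_range.1 hk
      simp only [Finset.mem_Icc]
      omega
    · intro m hm
      have := Finset.mem_Icc.1 hm
      simp only [Finset.mem_range]
      omega
    · intro k hk
      have := Finset.mem_range.1 hk
      show n - (n - k) = k
      omega
    · intro m hm
      have := Finset.mem_Icc.1 hm
      show n - (n - m) = m
      omega
    · intro k hk
      have hkn := Finset.mem_range.1 hk
      have h1 : n - (n - k) = k := by omega
      have h2 : a ^ (n - k) = α ^ ((n - k) * i) := by
        rw [ha, ← pow_mul, mul_comm]
      rw [h1, ← mul_assoc, mul_comm (C a) (X ^ k), mul_assoc, ← C_pow, ← map_mul,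
        ← pow_succ']
      have h3 : (n - 1 - k) + 1 = n - k := by omega
      rw [h3, h2]
      ring
  calc ∏ j ∈ (Finset.range n).erase i, (C ((a - α ^ j)⁻¹) * (X - C (α ^ j)))
      = (∏ j ∈ (Finset.range n).erase i, C ((a - α ^ j)⁻¹)) * P := by
        rw [hP, Finset.prod_mul_distrib]
    _ = C ((∏ j ∈ (Finset.range n).erase i, (a - α ^ j))⁻¹) * T := by
        rw [← map_prod, ← Finset.prod_inv_distrib, hPT]
    _ = C (-a) * T := by rw [hD, hinv]
    _ = -(C a * T) := by rw [map_neg, neg_mul]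
    _ = -∑ m ∈ Finset.Icc 1 n, C (α ^ (m * i)) * X ^ (n - m) := by rw [hS]
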